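/- arXiv:1803.00952 — 2 statements merged into one kernel-verified Lean document; each statement's English description precedes it below -/
import Mathlib

section
/- Let v_0 < v_1 < … < v_m < v_{m+1} be real breakpoints and y_1, …, y_m ∈ {0,1} satisfy the ordering constraints y_j ≤ y_{j+1} for j = 1,…,m−1. If x ∈ ℝ satisfies x ≥ v_0 + Σ_{j=1}^m (v_j − v_{j−1})(1 − y_j) and x ≤ v_{m+1} + Σ_{j=1}^m (v_j − v_{j+1}) y_j, then: for every j with y_j = 1 we have x ≤ v_j, and for every j with y_j = 0 we have x ≥ v_j. -/
lemma tele1 (v : ℕ → ℝ) (j m : ℕ) (h : j ≤ m) :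
    ∑ k ∈ Finset.Icc j m, (v k - v (k + 1)) = v j - v (m + 1) := by
  induction m with
  | zero =>
    interval_cases j
    simp
  | succ n ih =>
    rcases Nat.lt_or_ge n j with h1 | h1
    · have : j = n + 1 := le_antisymm h h1
      subst this
      simp
  -- fallthrough handled below
    · rw [Finset.sum_Icc_succ_top (by omega : j ≤ n + 1), ih h1]
      ring

lemma tele2 (v : ℕ → ℝ) (j : ℕ) :
    ∑ k ∈ Finset.Icc 1 j, (v k - v (k - 1)) = v j - v 0 := by
  induction j with
  | zero => simp
  | succ n ih =>
    rw [Finset.sum_Icc_succ_top (by omega : 1 ≤ n + 1), ih]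
    simp

/-- Correctness of the linking constraints: under the ordering constraints on the
binary variables `y`, the two linking inequalities imply `x ≤ v j` whenever `y j = 1`
and `x ≥ v j` whenever `y j = 0`. -/
theorem stmt_6 (m : ℕ) (v : ℕ → ℝ) (hv : ∀ j ≤ m, v j < v (j + 1))
    (y : ℕ → ℝ)
    (hy01 : ∀ j ∈ Finset.Icc 1 m, y j = 0 ∨ y j = 1)
    (hmono : ∀ j, 1 ≤ j → j + 1 ≤ m → y j ≤ y (j + 1))
    (x : ℝ)
    (hxl : v 0 + ∑ j ∈ Finset.Icc 1 m, (v j - v (j - 1)) * (1 - y j) ≤ x)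
    (hxu : x ≤ v (m + 1) + ∑ j ∈ Finset.Icc 1 m, (v j - v (j + 1)) * y j) :
    ∀ j ∈ Finset.Icc 1 m, (y j = 1 → x ≤ v j) ∧ (y j = 0 → v j ≤ x) := by
  have hyb : ∀ k ∈ Finset.Icc 1 m, 0 ≤ y k ∧ y k ≤ 1 := by
    intro k hk
    rcases hy01 k hk with h | h <;> simp [h]
  have hmono2 : ∀ a b, 1 ≤ a → a ≤ b → b ≤ m → y a ≤ y b := by
    intro a b ha hab hbm
    induction b with
    | zero => omega
    | succ n ih =>
      rcases Nat.lt_or_ge n a with h1 | h1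
      · have : a = n + 1 := by omega
        subst this; exact le_refl _
      · exact le_trans (ih (by omega) (by omega)) (hmono n (by omega) hbm)
  intro j hj
  simp only [Finset.mem_Icc] at hj
  obtain ⟨hj1, hjm⟩ := hj
  constructor
  · -- y j = 1 → x ≤ v j
    intro hyj
    have hone : ∀ k ∈ Finset.Icc j m, y k = 1 := by
      intro k hk
      simp only [Finset.mem_Icc] at hk
      have h1 : y j ≤ y k := hmono2 j k hj1 hk.1 hk.2
      have h2 := (hyb k (by simp [Finset.mem_Icc]; omega)).2
      linarith [h1, h2, hyj.le]
    have hsplit : Finset.Ico 1 j ∪ Finset.Icc j m = Finset.Icc 1 m := by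
      ext k; simp [Finset.mem_Ico, Finset.mem_Icc]; omega
    have hdisj : Disjoint (Finset.Ico 1 j) (Finset.Icc j m) := by
      simp [Finset.disjoint_left, Finset.mem_Ico, Finset.mem_Icc]
      omega
    have hsum : ∑ k ∈ Finset.Icc 1 m, (v k - v (k + 1)) * y k
        = ∑ k ∈ Finset.Ico 1 j, (v k - v (k + 1)) * y k
          + ∑ k ∈ Finset.Icc j m, (v k - v (k + 1)) * y k := by
      rw [← hsplit, Finset.sum_union hdisj]
    have h2 : ∑ k ∈ Finset.Icc j m, (v k - v (k + 1)) * y k = v j - v (m + 1) := by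
      rw [Finset.sum_congr rfl (fun k hk => by rw [hone k hk, mul_one]), tele1 v j m hjm]
    have h3 : ∑ k ∈ Finset.Ico 1 j, (v k - v (k + 1)) * y k ≤ 0 := by
      apply Finset.sum_nonpos
      intro k hk
      simp only [Finset.mem_Ico] at hk
      have hvk : v k < v (k + 1) := hv k (by omega)
      have hyk : 0 ≤ y k := (hyb k (by simp [Finset.mem_Icc]; omega)).1
      nlinarith
    rw [hsum, h2] at hxu
    linarith
  · -- y j = 0 → v j ≤ x
    intro hyj
    have hzero : ∀ k ∈ Finset.Icc 1 j, y k = 0 := by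
      intro k hk
      simp only [Finset.mem_Icc] at hk
      have h1 : y k ≤ y j := hmono2 k j hk.1 hk.2 hjm
      have h2 := (hyb k (by simp [Finset.mem_Icc]; omega)).1
      linarith [h1, h2, hyj.le]
    have hsplit : Finset.Icc 1 j ∪ Finset.Ioc j m = Finset.Icc 1 m := by
      ext k; simp [Finset.mem_Ioc, Finset.mem_Icc]; omega
    have hdisj : Disjoint (Finset.Icc 1 j) (Finset.Ioc j m) := by
      simp [Finset.disjoint_left, Finset.mem_Ioc, Finset.mem_Icc]
      omega
    have hsum : ∑ k ∈ Finset.Icc 1 m, (v k - v (k - 1)) * (1 - y k)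
        = ∑ k ∈ Finset.Icc 1 j, (v k - v (k - 1)) * (1 - y k)
          + ∑ k ∈ Finset.Ioc j m, (v k - v (k - 1)) * (1 - y k) := by
      rw [← hsplit, Finset.sum_union hdisj]
    have h2 : ∑ k ∈ Finset.Icc 1 j, (v k - v (k - 1)) * (1 - y k) = v j - v 0 := by
      calc ∑ k ∈ Finset.Icc 1 j, (v k - v (k - 1)) * (1 - y k)
          = ∑ k ∈ Finset.Icc 1 j, (v k - v (k - 1)) :=
            Finset.sum_congr rfl (fun k hk => by rw [hzero k hk]; ring)
        _ = v j - v 0 := tele2 v j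
    have h3 : 0 ≤ ∑ k ∈ Finset.Ioc j m, (v k - v (k - 1)) * (1 - y k) := by
      apply Finset.sum_nonneg
      intro k hk
      simp only [Finset.mem_Ioc] at hk
      have hk1 : 1 ≤ k := by omega
      have hvk : v (k - 1) < v k := by
        have := hv (k - 1) (by omega)
        rwa [Nat.sub_add_cancel hk1] at this
      have hyk : y k ≤ 1 := (hyb k (by simp [Finset.mem_Icc]; omega)).2
      nlinarith
    rw [hsum, h2] at hxl
    linarith
end

section
/- Let z : L → ℝ≥0 over a finite leaf set L of a binary tree with root such that Σ_{l∈L} z_l = 1, and suppose binary values y_s ∈ {0,1} are given for each split node s with the constraints Σ_{l ∈ Left(s)} z_l ≤ y_s and Σ_{l ∈ Right(s)} z_l ≤ 1 − y_s, where Left(s) and Right(s) are the leaf sets of the left and right subtrees of s. Then z is integral: there is exactly one leaf l* with z_{l*} = 1 and z_l = 0 for all other leaves. -/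
/-- A rooted binary tree with naturally numbered leaves and split nodes. -/
inductive BTree where
  | leaf (l : ℕ) : BTree
  | node (s : ℕ) (left right : BTree) : BTree

/-- The set of leaves of a binary tree. -/
def BTree.leaves : BTree → Finset ℕ
  | .leaf l => {l}
  | .node _ a b => a.leaves ∪ b.leaves

/-- The set of split nodes of a binary tree. -/
def BTree.splitNodes : BTree → Finset ℕ
  | .leaf _ => ∅
  | .node s a b => insert s (a.splitNodes ∪ b.splitNodes)

/-- Well-formedness: leaf labels of the two subtrees are disjoint and split labels are
distinct throughout the tree. -/
def BTree.WF : BTree → Prop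
  | .leaf _ => True
  | .node s a b => a.WF ∧ b.WF ∧ Disjoint a.leaves b.leaves ∧
      s ∉ a.splitNodes ∪ b.splitNodes ∧ Disjoint a.splitNodes b.splitNodes

/-- Leaves of the left subtree of the split node labeled `s`. -/
def BTree.leftLeaves : BTree → ℕ → Finset ℕ
  | .leaf _, _ => ∅
  | .node s' a b, s =>
      (if s' = s then a.leaves else ∅) ∪ a.leftLeaves s ∪ b.leftLeaves s

/-- Leaves of the right subtree of the split node labeled `s`. -/
def BTree.rightLeaves : BTree → ℕ → Finset ℕ
  | .leaf _, _ => ∅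
  | .node s' a b, s =>
      (if s' = s then b.leaves else ∅) ∪ a.rightLeaves s ∪ b.rightLeaves s

lemma leftLeaves_of_not_mem (t : BTree) (s : ℕ) (h : s ∉ t.splitNodes) :
    t.leftLeaves s = ∅ := by
  induction t with
  | leaf l => rfl
  | node s' a b iha ihb =>
    simp only [BTree.splitNodes, Finset.mem_insert, Finset.mem_union, not_or] at h
    simp [BTree.leftLeaves, iha h.2.1, ihb h.2.2, Ne.symm h.1]

lemma rightLeaves_of_not_mem (t : BTree) (s : ℕ) (h : s ∉ t.splitNodes) :
    t.rightLeaves s = ∅ := by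
  induction t with
  | leaf l => rfl
  | node s' a b iha ihb =>
    simp only [BTree.splitNodes, Finset.mem_insert, Finset.mem_union, not_or] at h
    simp [BTree.rightLeaves, iha h.2.1, ihb h.2.2, Ne.symm h.1]

lemma exists_leaf (t : BTree) (hwf : t.WF) (z : ℕ → ℝ) (hz : ∀ l, 0 ≤ z l)
    (hsum : ∑ l ∈ t.leaves, z l = 1)
    (y : ℕ → ℝ) (hy : ∀ s ∈ t.splitNodes, y s = 0 ∨ y s = 1)
    (hleft : ∀ s ∈ t.splitNodes, ∑ l ∈ t.leftLeaves s, z l ≤ y s)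
    (hright : ∀ s ∈ t.splitNodes, ∑ l ∈ t.rightLeaves s, z l ≤ 1 - y s) :
    ∃ l₀, l₀ ∈ t.leaves ∧ z l₀ = 1 ∧ ∀ l ∈ t.leaves, l ≠ l₀ → z l = 0 := by
  induction t with
  | leaf l =>
    refine ⟨l, by simp [BTree.leaves], by simpa [BTree.leaves] using hsum, ?_⟩
    intro l' hl' hne
    simp [BTree.leaves] at hl'
    exact absurd hl' hne
  | node s a b iha ihb =>
    obtain ⟨hwa, hwb, hdisj, hs, hsd⟩ := hwf
    have hsmem : s ∈ (BTree.node s a b).splitNodes := by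
      simp [BTree.splitNodes]
    have hsa : s ∉ a.splitNodes := fun h => hs (Finset.mem_union_left _ h)
    have hsb : s ∉ b.splitNodes := fun h => hs (Finset.mem_union_right _ h)
    have hL : (BTree.node s a b).leftLeaves s = a.leaves := by
      simp [BTree.leftLeaves, leftLeaves_of_not_mem a s hsa,
        leftLeaves_of_not_mem b s hsb]
    have hR : (BTree.node s a b).rightLeaves s = b.leaves := by
      simp [BTree.rightLeaves, rightLeaves_of_not_mem a s hsa,
        rightLeaves_of_not_mem b s hsb]
    have hsplit : ∑ l ∈ (BTree.node s a b).leaves, z l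
        = ∑ l ∈ a.leaves, z l + ∑ l ∈ b.leaves, z l := by
      rw [show (BTree.node s a b).leaves = a.leaves ∪ b.leaves from rfl,
        Finset.sum_union hdisj]
    -- restricted hypotheses for subtrees
    have hmem_a : ∀ s' ∈ a.splitNodes, s' ∈ (BTree.node s a b).splitNodes := by
      intro s' h; simp [BTree.splitNodes, h]
    have hmem_b : ∀ s' ∈ b.splitNodes, s' ∈ (BTree.node s a b).splitNodes := by
      intro s' h; simp [BTree.splitNodes, h]
    have hsubL_a : ∀ s', a.leftLeaves s' ⊆ (BTree.node s a b).leftLeaves s' := by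
      intro s'
      exact Finset.Subset.trans (Finset.subset_union_right)
        (Finset.subset_union_left)
    have hsubL_b : ∀ s', b.leftLeaves s' ⊆ (BTree.node s a b).leftLeaves s' := by
      intro s'; exact Finset.subset_union_right
    have hsubR_a : ∀ s', a.rightLeaves s' ⊆ (BTree.node s a b).rightLeaves s' := by
      intro s'
      exact Finset.Subset.trans (Finset.subset_union_right)
        (Finset.subset_union_left)
    have hsubR_b : ∀ s', b.rightLeaves s' ⊆ (BTree.node s a b).rightLeaves s' := by
      intro s'; exact Finset.subset_union_right
    have hleft_a : ∀ s' ∈ a.splitNodes, ∑ l ∈ a.leftLeaves s', z l ≤ y s' :=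
      fun s' h => le_trans
        (Finset.sum_le_sum_of_subset_of_nonneg (hsubL_a s') (fun i _ _ => hz i))
        (hleft s' (hmem_a s' h))
    have hleft_b : ∀ s' ∈ b.splitNodes, ∑ l ∈ b.leftLeaves s', z l ≤ y s' :=
      fun s' h => le_trans
        (Finset.sum_le_sum_of_subset_of_nonneg (hsubL_b s') (fun i _ _ => hz i))
        (hleft s' (hmem_b s' h))
    have hright_a : ∀ s' ∈ a.splitNodes, ∑ l ∈ a.rightLeaves s', z l ≤ 1 - y s' :=
      fun s' h => le_trans
        (Finset.sum_le_sum_of_subset_of_nonneg (hsubR_a s') (fun i _ _ => hz i))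
        (hright s' (hmem_a s' h))
    have hright_b : ∀ s' ∈ b.splitNodes, ∑ l ∈ b.rightLeaves s', z l ≤ 1 - y s' :=
      fun s' h => le_trans
        (Finset.sum_le_sum_of_subset_of_nonneg (hsubR_b s') (fun i _ _ => hz i))
        (hright s' (hmem_b s' h))
    have hy_a : ∀ s' ∈ a.splitNodes, y s' = 0 ∨ y s' = 1 :=
      fun s' h => hy s' (hmem_a s' h)
    have hy_b : ∀ s' ∈ b.splitNodes, y s' = 0 ∨ y s' = 1 :=
      fun s' h => hy s' (hmem_b s' h)
    rcases hy s hsmem with h0 | h1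
    · -- y s = 0 : left mass is zero, all mass on b
      have hAle : ∑ l ∈ a.leaves, z l ≤ 0 := by
        have := hleft s hsmem; rw [hL, h0] at this; exact this
      have hA0 : ∑ l ∈ a.leaves, z l = 0 :=
        le_antisymm hAle (Finset.sum_nonneg fun i _ => hz i)
      have hAz : ∀ l ∈ a.leaves, z l = 0 :=
        (Finset.sum_eq_zero_iff_of_nonneg (fun i _ => hz i)).1 hA0
      have hB1 : ∑ l ∈ b.leaves, z l = 1 := by
        have := hsplit; rw [hsum, hA0] at this; linarith
      obtain ⟨l₀, hl₀, hz1, hrest⟩ := ihb hwb hB1 hy_b hleft_b hright_b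
      refine ⟨l₀, Finset.mem_union_right _ hl₀, hz1, ?_⟩
      intro l hl hne
      rcases Finset.mem_union.1 hl with h | h
      · exact hAz l h
      · exact hrest l h hne
    · -- y s = 1 : right mass is zero, all mass on a
      have hBle : ∑ l ∈ b.leaves, z l ≤ 0 := by
        have := hright s hsmem; rw [hR, h1] at this; linarith
      have hB0 : ∑ l ∈ b.leaves, z l = 0 :=
        le_antisymm hBle (Finset.sum_nonneg fun i _ => hz i)
      have hBz : ∀ l ∈ b.leaves, z l = 0 :=
        (Finset.sum_eq_zero_iff_of_nonneg (fun i _ => hz i)).1 hB0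
      have hA1 : ∑ l ∈ a.leaves, z l = 1 := by
        have := hsplit; rw [hsum, hB0] at this; linarith
      obtain ⟨l₀, hl₀, hz1, hrest⟩ := iha hwa hA1 hy_a hleft_a hright_a
      refine ⟨l₀, Finset.mem_union_left _ hl₀, hz1, ?_⟩
      intro l hl hne
      rcases Finset.mem_union.1 hl with h | h
      · exact hrest l h hne
      · exact hBz l h

/-- Integrality of the leaf-selection variables: if `z ≥ 0` sums to one over the
leaves and, for a 0/1 assignment `y` on split nodes, all mass on the left (resp.
right) leaf set of each split is at most `y s` (resp. `1 - y s`), then `z` places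
all its mass on exactly one leaf. -/
theorem stmt_8 (t : BTree) (hwf : t.WF) (z : ℕ → ℝ) (hz : ∀ l, 0 ≤ z l)
    (hsum : ∑ l ∈ t.leaves, z l = 1)
    (y : ℕ → ℝ) (hy : ∀ s ∈ t.splitNodes, y s = 0 ∨ y s = 1)
    (hleft : ∀ s ∈ t.splitNodes, ∑ l ∈ t.leftLeaves s, z l ≤ y s)
    (hright : ∀ s ∈ t.splitNodes, ∑ l ∈ t.rightLeaves s, z l ≤ 1 - y s) :
    ∃! l₀, l₀ ∈ t.leaves ∧ z l₀ = 1 ∧ ∀ l ∈ t.leaves, l ≠ l₀ → z l = 0 := by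
  obtain ⟨l₀, hmem, h1, h0⟩ := exists_leaf t hwf z hz hsum y hy hleft hright
  refine ⟨l₀, ⟨hmem, h1, h0⟩, ?_⟩
  rintro l' ⟨hl', hz', hrest'⟩
  by_contra hne
  have := h0 l' hl' hne
  rw [hz'] at this
  norm_num at this
end
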